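/- Let D ⊂ ℂⁿ be a bounded strictly convex domain with C² boundary S, outward unit normal ν, and constants α₁, α₂, r₁ > 0 as in the basic convexity estimates. Set λ = 4√(α₂/α₁) and let s be the covering integer for this λ. For families ℱ_i = {𝔹(z_{i,j}, λr)} (1 ≤ i ≤ 2s, with ℱ_{i+s} = ℱ_i and z_{i+s,j} = z_{i,j}) of pairwise disjoint balls with centers z_{i,j} ∈ S whose concentric balls of radius r cover S, define φ_{i,j}(z) = exp(−m⟨z_{i,j} − z, ν(z_{i,j})⟩) and, for coefficients |β_{i,j}| ≤ 1, g_i(z) = Σ_{j=1}^{N_i} β_{i,j} φ_{i,j}(z). Then for every sufficiently small η > 0 there exist m > 0 and r > 0 with 0 < λr < r₁ such that for each i, 1 ≤ i ≤ 2s: (a) if z ∈ S lies in no ball of ℱ_i, then |g_i(z)| < η; (b) if z lies in the closure of D and in 𝔹(z_{i,j}, λr) for some j, then |g_i(z) − β_{i,j}φ_{i,j}(z)| < η; (c) if z ∈ S ∩ 𝔹(z_{i,j}, r) for some j, then |φ_{i,j}(z)| ≥ C η^{1/16}, where C > 0 is a constant independent of r, m and η; (d) if z lies in the closure of D and on the sphere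 b𝔹(z_{i,j}, λr) for some j, then |φ_{i,j}(z)| < η^{2/3}. Moreover r can be taken arbitrarily small and m arbitrarily large. -/

import Mathlib

open Metric Set Filter Function
open scoped ENNReal Topology

noncomputable section

/-- `ℂⁿ` with the Euclidean (Hermitian) metric. -/
abbrev CSp (n : ℕ) := EuclideanSpace ℂ (Fin n)

/-- `D` is a bounded strictly convex domain in `ℂⁿ` with boundary of class `C²`:
`D` is open, connected, bounded, strictly convex, and admits a `C²` defining function
with nonvanishing gradient on the boundary. -/
def IsStrictlyConvexC2Domain {n : ℕ} (D : Set (CSp n)) : Prop :=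
  IsOpen D ∧ IsConnected D ∧ Bornology.IsBounded D ∧ StrictConvex ℝ D ∧
    ∃ ρ : CSp n → ℝ, ContDiff ℝ 2 ρ ∧ D = {z | ρ z < 0} ∧
      ∀ z ∈ frontier D, fderiv ℝ ρ z ≠ 0

/-- `ν` is the outward unit normal field on the boundary of the convex domain `D`:
at every boundary point `w`, `ν w` is a unit vector and the real hyperplane through `w`
orthogonal to `ν w` supports `D`, i.e. `Re⟪z - w, ν w⟫ ≤ 0` for all `z ∈ closure D`. -/
def IsOutwardUnitNormal {n : ℕ} (D : Set (CSp n)) (ν : CSp n → CSp n) : Prop :=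
  ∀ w ∈ frontier D, ‖ν w‖ = 1 ∧ ∀ z ∈ closure D, (inner ℂ (ν w) (z - w) : ℂ).re ≤ 0

/-- `s` is a covering integer for the compact set `S` and the factor `lam`: for every
`r > 0` there are `s` finite families of pairwise disjoint balls of radius `lam * r`
centered on `S` such that the concentric balls of radius `r` cover `S`. -/
def IsCoveringInteger {n : ℕ} (S : Set (CSp n)) (lam : ℝ) (s : ℕ) : Prop :=
  0 < s ∧ ∀ r : ℝ, 0 < r →
    ∃ (N : Fin s → ℕ) (c : (i : Fin s) → Fin (N i) → CSp n),
      (∀ i j, c i j ∈ S) ∧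
      (∀ i, ∀ j k, j ≠ k → Disjoint (ball (c i j) (lam * r)) (ball (c i k) (lam * r))) ∧
      S ⊆ ⋃ i, ⋃ j, ball (c i j) r

/-- The holomorphic peak function `φ(z) = exp(-m⟨w - z, ν w⟩)` associated to the boundary
point `w`, the outward normal `ν w` and the parameter `m` (the Hermitian product being
conjugate-linear in `ν w`, so that `φ` is holomorphic in `z`). -/
noncomputable def peakFn {n : ℕ} (ν : CSp n → CSp n) (m : ℝ) (w z : CSp n) : ℂ :=
  Complex.exp (-(m : ℂ) * (inner ℂ (ν w) (w - z) : ℂ))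

set_option maxHeartbeats 1000000

namespace PeakAux

open MeasureTheory Finset

lemma abs_peakFn {n : ℕ} (ν : CSp n → CSp n) (m : ℝ) (w z : CSp n) :
    norm (peakFn ν m w z) = Real.exp (-(m * (inner ℂ (ν w) (w - z) : ℂ).re)) := by
  rw [peakFn, Complex.norm_exp]
  congr 1
  simp [Complex.mul_re]

lemma pack {n N : ℕ} (c : Fin N → CSp n) (a : ℝ) (ha : 0 < a)
    (hdisj : ∀ j k : Fin N, j ≠ k → Disjoint (ball (c j) a) (ball (c k) a))
    (z : CSp n) (R : ℝ) (hR : 0 ≤ R) (F : Finset (Fin N))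
    (hF : ∀ j ∈ F, dist z (c j) < R) :
    (F.card : ℝ) * a ^ (Module.finrank ℝ (CSp n)) ≤ (R + a) ^ (Module.finrank ℝ (CSp n)) := by
  rcases subsingleton_or_nontrivial (CSp n) with hsub | hnt
  · -- all balls are equal & nonempty, so at most one index in F; finrank = 0
    have hd : Module.finrank ℝ (CSp n) = 0 := by
      have : Subsingleton (CSp n) := hsub
      exact Module.finrank_zero_of_subsingleton
    rw [hd]
    simp only [pow_zero, mul_one]
    have hcard : F.card ≤ 1 := by
      refine Finset.card_le_one.mpr fun j hj k hk => ?_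
      by_contra hne
      have := hdisj j k hne
      have : (ball (c j) a ∩ ball (c k) a).Nonempty := by
        refine ⟨c j, mem_ball_self ha, ?_⟩
        have : c j = c k := Subsingleton.elim _ _
        rw [this]; exact mem_ball_self ha
      exact absurd (hdisj j k hne) (by
        rw [Set.not_disjoint_iff_nonempty_inter]; exact this)
    exact_mod_cast hcard
  · letI : MeasurableSpace (CSp n) := borel _
    haveI : BorelSpace (CSp n) := ⟨rfl⟩
    set μ : Measure (CSp n) := Measure.addHaar with hμ
    set d := Module.finrank ℝ (CSp n) with hd
    have hsub : ∀ j ∈ F, ball (c j) a ⊆ ball z (R + a) := by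
      intro j hj x hx
      have := hF j hj
      rw [mem_ball] at hx ⊢
      calc dist x z ≤ dist x (c j) + dist (c j) z := dist_triangle _ _ _
        _ < a + R := add_lt_add hx (by rwa [dist_comm])
        _ = R + a := by ring
    have hdisj' : (F : Set (Fin N)).PairwiseDisjoint fun j => ball (c j) a := by
      intro j _ k _ hjk
      exact hdisj j k hjk
    have hmeas : μ (⋃ j ∈ F, ball (c j) a) = ∑ j ∈ F, μ (ball (c j) a) :=
      measure_biUnion_finset hdisj' fun j _ => measurableSet_ball
    have hle : ∑ j ∈ F, μ (ball (c j) a) ≤ μ (ball z (R + a)) := by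
      rw [← hmeas]
      exact measure_mono (Set.iUnion₂_subset hsub)
    have hball : ∀ x : CSp n, ∀ r : ℝ, 0 ≤ r →
        μ (ball x r) = ENNReal.ofReal (r ^ d) * μ (ball (0 : CSp n) 1) := by
      intro x r hr; exact Measure.addHaar_ball μ x hr
    rw [Finset.sum_congr rfl (fun j _ => hball (c j) a ha.le), Finset.sum_const,
        hball z (R + a) (by positivity)] at hle
    have hB0 : μ (ball (0 : CSp n) 1) ≠ 0 := (measure_ball_pos _ _ one_pos).ne'
    have hBt : μ (ball (0 : CSp n) 1) ≠ ⊤ := measure_ball_lt_top.ne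
    rw [nsmul_eq_mul, ← mul_assoc] at hle
    have := (ENNReal.mul_le_mul_iff_left hB0 hBt).mp hle
    have h2 : ENNReal.ofReal ((F.card : ℝ) * a ^ d) ≤ ENNReal.ofReal ((R + a) ^ d) := by
      rwa [ENNReal.ofReal_mul (by positivity), ENNReal.ofReal_natCast]
    exact (ENNReal.ofReal_le_ofReal_iff (by positivity)).mp h2

lemma two_add_le (q : ℕ) (hq : 1 ≤ q) : (q : ℝ) + 2 ≤ 4 ^ q := by
  induction q with
  | zero => omega
  | succ p ih =>
    rcases Nat.eq_zero_or_pos p with hp | hp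
    · subst hp; norm_num
    · have h := ih hp
      have h4 : (1:ℝ) ≤ 4 ^ p := one_le_pow₀ (by norm_num)
      push_cast
      rw [pow_succ]
      nlinarith

lemma arith (d q : ℕ) (hq : 1 ≤ q) :
    ((q:ℝ) + 2) ^ d * Real.exp (-(16 * ((d:ℝ) + 1)) * (q:ℝ) ^ 2) ≤ (1/4 : ℝ) ^ q := by
  have h1 : ((q:ℝ) + 2) ^ d ≤ ((4:ℝ) ^ q) ^ d :=
    pow_le_pow_left₀ (by positivity) (two_add_le q hq) d
  have hq1 : (1:ℝ) ≤ (q:ℝ) := by exact_mod_cast hq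
  have h2 : Real.exp (-(16 * ((d:ℝ) + 1)) * (q:ℝ) ^ 2) ≤ Real.exp (-(16 * ((d:ℝ) + 1)) * (q:ℝ)) := by
    apply Real.exp_le_exp.mpr
    have hA : (0:ℝ) ≤ 16 * ((d:ℝ) + 1) := by positivity
    nlinarith [mul_nonneg (mul_nonneg hA (by linarith : (0:ℝ) ≤ (q:ℝ))) (by linarith : (0:ℝ) ≤ (q:ℝ) - 1)]
  have key : ((4:ℝ) ^ q) ^ d * Real.exp (-(16 * ((d:ℝ) + 1)) * (q:ℝ)) ≤ (1/4 : ℝ) ^ q := by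
    -- equivalent to 4^(qd) * 4^q ≤ exp(16(d+1)q)
    have e2 : (2:ℝ) ≤ Real.exp 1 := by
      have := Real.add_one_le_exp (1:ℝ); linarith
    have h4e : (4:ℝ) ≤ Real.exp 2 := by
      have : (2:ℝ) * 2 ≤ Real.exp 1 * Real.exp 1 := by nlinarith [Real.exp_pos (1:ℝ)]
      rw [← Real.exp_add] at this; norm_num at this ⊢; linarith
    have hpow : (4:ℝ) ^ (q * d + q) ≤ Real.exp (2 * (q * d + q)) := by
      calc (4:ℝ) ^ (q * d + q) ≤ (Real.exp 2) ^ (q * d + q) := pow_le_pow_left₀ (by norm_num) h4e _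
        _ = Real.exp (2 * (q * d + q)) := by
            rw [← Real.exp_nat_mul]; push_cast; ring_nf
    have hexp : (2:ℝ) * (q * d + q) ≤ 16 * ((d:ℝ) + 1) * q := by
      push_cast; nlinarith [hq1, Nat.cast_nonneg (α := ℝ) d]
    have h5 : (4:ℝ) ^ (q * d + q) ≤ Real.exp (16 * ((d:ℝ) + 1) * (q:ℝ)) := by
      calc (4:ℝ) ^ (q * d + q) ≤ Real.exp (2 * (q * d + q)) := hpow
        _ ≤ _ := Real.exp_le_exp.mpr hexp
    have h6 : ((4:ℝ) ^ q) ^ d * (4:ℝ) ^ q = (4:ℝ) ^ (q * d + q) := by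
      rw [← pow_mul, ← pow_add]
    have h4q : (0:ℝ) < (4:ℝ) ^ q := by positivity
    rw [div_pow, one_pow, le_div_iff₀ h4q]
    calc ((4:ℝ) ^ q) ^ d * Real.exp (-(16 * ((d:ℝ) + 1)) * (q:ℝ)) * 4 ^ q
        = (4:ℝ) ^ (q * d + q) * Real.exp (-(16 * ((d:ℝ) + 1)) * (q:ℝ)) := by rw [← h6]; ring
      _ ≤ Real.exp (16 * ((d:ℝ) + 1) * (q:ℝ)) * Real.exp (-(16 * ((d:ℝ) + 1)) * (q:ℝ)) := by
          apply mul_le_mul_of_nonneg_right h5 (Real.exp_pos _).le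
      _ = 1 := by rw [← Real.exp_add]; ring_nf; exact Real.exp_zero
  calc ((q:ℝ) + 2) ^ d * Real.exp (-(16 * ((d:ℝ) + 1)) * (q:ℝ) ^ 2)
      ≤ ((4:ℝ) ^ q) ^ d * Real.exp (-(16 * ((d:ℝ) + 1)) * (q:ℝ)) := by
        apply mul_le_mul h1 h2 (Real.exp_pos _).le (by positivity)
    _ ≤ (1/4 : ℝ) ^ q := key

lemma geom_bound (G : Finset ℕ) (hG : ∀ k ∈ G, 1 ≤ k) : ∑ k ∈ G, (1/4 : ℝ) ^ k ≤ 1/3 := by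
  set B := G.sup id with hB
  have hsub : G ⊆ Finset.Ico 1 (B + 1) := by
    intro k hk
    rw [Finset.mem_Ico]
    exact ⟨hG k hk, Nat.lt_succ_of_le (Finset.le_sup (f := id) hk)⟩
  calc ∑ k ∈ G, (1/4 : ℝ) ^ k ≤ ∑ k ∈ Finset.Ico 1 (B + 1), (1/4 : ℝ) ^ k :=
        Finset.sum_le_sum_of_subset_of_nonneg hsub (fun k _ _ => by positivity)
    _ = ∑ i ∈ Finset.range B, (1/4 : ℝ) ^ (1 + i) := by
        rw [Finset.sum_Ico_eq_sum_range]; norm_num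
    _ = (1/4) * ∑ i ∈ Finset.range B, (1/4 : ℝ) ^ i := by
        rw [Finset.mul_sum]; congr 1; ext i; rw [pow_add, pow_one]
    _ ≤ 1/3 := by
        rw [geom_sum_eq (by norm_num : (1/4:ℝ) ≠ 1)]
        have h1 : (0:ℝ) ≤ (1/4:ℝ) ^ B := by positivity
        have h2 : ((1/4:ℝ) ^ B - 1) / (1/4 - 1) = (1 - (1/4:ℝ)^B) * (4/3) := by ring
        rw [h2]; nlinarith

lemma core {n N : ℕ} (c : Fin N → CSp n) (a : ℝ) (ha : 0 < a)
    (hdisj : ∀ j k : Fin N, j ≠ k → Disjoint (ball (c j) a) (ball (c k) a))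
    (z : CSp n) (F : Finset (Fin N)) (hfar : ∀ j ∈ F, a ≤ dist z (c j))
    (η T : ℝ) (hη : 0 < η) (hη1 : η < 1)
    (hT : T = ((Module.finrank ℝ (CSp n) : ℝ) + 1) - Real.log η / 16)
    (t : Fin N → ℝ)
    (ht : ∀ j ∈ F, t j ≤ Real.exp (-(16 * T) * (dist z (c j) / a) ^ 2)) :
    ∑ j ∈ F, t j < η := by
  set d := Module.finrank ℝ (CSp n) with hd
  set K : ℝ := (d : ℝ) + 1 with hK
  have hlog : Real.log η < 0 := Real.log_neg hη hη1
  have hK1 : (1:ℝ) ≤ K := by rw [hK]; have := Nat.cast_nonneg (α := ℝ) d; linarith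
  have hKT : K ≤ T := by rw [hT]; linarith
  have hT0 : 0 < T := by linarith
  set k : Fin N → ℕ := fun j => ⌊dist z (c j) / a⌋₊ with hk
  have hk1 : ∀ j ∈ F, 1 ≤ k j := by
    intro j hj
    exact Nat.le_floor (by
      rw [Nat.cast_one, le_div_iff₀ ha]
      simpa using hfar j hj)
  have hklb : ∀ j : Fin N, (k j : ℝ) ≤ dist z (c j) / a :=
    fun j => Nat.floor_le (by positivity)
  have hkub : ∀ j : Fin N, dist z (c j) / a < k j + 1 := fun j => Nat.lt_floor_add_one _
  -- step 1 : pointwise bound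
  have step1 : ∀ j ∈ F, t j ≤ η * Real.exp (-(16 * K) * (k j : ℝ) ^ 2) := by
    intro j hj
    have hkr : (1:ℝ) ≤ (k j : ℝ) := by exact_mod_cast hk1 j hj
    have hsq : ((k j : ℝ)) ^ 2 ≤ (dist z (c j) / a) ^ 2 := by
      apply pow_le_pow_left₀ (by positivity) (hklb j)
    have h1 : Real.exp (-(16 * T) * (dist z (c j) / a) ^ 2)
        ≤ Real.exp (-(16 * T) * (k j : ℝ) ^ 2) := by
      apply Real.exp_le_exp.mpr
      nlinarith
    have h2 : Real.exp (-(16 * T) * (k j : ℝ) ^ 2) ≤ η * Real.exp (-(16 * K) * (k j : ℝ) ^ 2) := by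
      rw [← Real.exp_log hη, ← Real.exp_add]
      apply Real.exp_le_exp.mpr
      rw [hT]
      have hksq : (1:ℝ) ≤ (k j : ℝ) ^ 2 := by nlinarith
      nlinarith [mul_nonneg (neg_nonneg.mpr hlog.le) (by linarith : (0:ℝ) ≤ (k j:ℝ)^2 - 1)]
    exact le_trans (ht j hj) (le_trans h1 h2)
  -- step 2
  have step2 : ∑ j ∈ F, t j ≤ η * ∑ j ∈ F, Real.exp (-(16 * K) * (k j : ℝ) ^ 2) := by
    rw [Finset.mul_sum]
    exact Finset.sum_le_sum step1
  -- step 3 : fiberwise counting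
  set B := F.sup k with hB
  have hmaps : ∀ j ∈ F, k j ∈ Finset.Icc 1 B :=
    fun j hj => Finset.mem_Icc.mpr ⟨hk1 j hj, Finset.le_sup hj⟩
  have step3 : ∑ j ∈ F, Real.exp (-(16 * K) * (k j : ℝ) ^ 2) ≤ 1/3 := by
    rw [← Finset.sum_fiberwise_of_maps_to hmaps (fun j => Real.exp (-(16 * K) * (k j : ℝ) ^ 2))]
    have inner_bound : ∀ q ∈ Finset.Icc 1 B,
        ∑ j ∈ F.filter (fun j => k j = q), Real.exp (-(16 * K) * (k j : ℝ) ^ 2) ≤ (1/4 : ℝ) ^ q := by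
      intro q hq
      obtain ⟨hq1, -⟩ := Finset.mem_Icc.mp hq
      have heq : ∑ j ∈ F.filter (fun j => k j = q), Real.exp (-(16 * K) * (k j : ℝ) ^ 2)
          = (F.filter (fun j => k j = q)).card * Real.exp (-(16 * K) * (q : ℝ) ^ 2) := by
        rw [Finset.sum_congr rfl (fun j hj => by
          rw [(Finset.mem_filter.mp hj).2]), Finset.sum_const, nsmul_eq_mul]
      rw [heq]
      have hcard : ((F.filter (fun j => k j = q)).card : ℝ) ≤ ((q:ℝ) + 2) ^ d := by
        have hpack := pack c a ha hdisj z (((q:ℝ) + 1) * a) (by positivity)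
          (F.filter (fun j => k j = q)) (by
            intro j hj
            obtain ⟨hjF, hjq⟩ := Finset.mem_filter.mp hj
            have := hkub j
            rw [hjq] at this
            exact (div_lt_iff₀ ha).mp this)
        have hexp : (((q:ℝ) + 1) * a + a) ^ d = ((q:ℝ) + 2) ^ d * a ^ d := by
          rw [← mul_pow]; ring_nf
        rw [hexp] at hpack
        have hapd : (0:ℝ) < a ^ d := by positivity
        exact le_of_mul_le_mul_right hpack hapd
      calc ((F.filter (fun j => k j = q)).card : ℝ) * Real.exp (-(16 * K) * (q : ℝ) ^ 2)
          ≤ ((q:ℝ) + 2) ^ d * Real.exp (-(16 * K) * (q : ℝ) ^ 2) :=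
            mul_le_mul_of_nonneg_right hcard (Real.exp_pos _).le
        _ ≤ (1/4 : ℝ) ^ q := by rw [hK]; exact arith d q hq1
    calc ∑ q ∈ Finset.Icc 1 B, ∑ j ∈ F.filter (fun j => k j = q),
          Real.exp (-(16 * K) * (k j : ℝ) ^ 2)
        ≤ ∑ q ∈ Finset.Icc 1 B, (1/4 : ℝ) ^ q := Finset.sum_le_sum inner_bound
      _ ≤ 1/3 := geom_bound _ (fun q hq => (Finset.mem_Icc.mp hq).1)
  calc ∑ j ∈ F, t j ≤ η * ∑ j ∈ F, Real.exp (-(16 * K) * (k j : ℝ) ^ 2) := step2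
    _ ≤ η * (1/3) := by
        apply mul_le_mul_of_nonneg_left step3 hη.le
    _ < η := by linarith

end PeakAux

open PeakAux

/-- Lemma 2.3. With `D`, `ν`, `α₁, α₂, r₁` as in the convexity estimates,
`lam = 4√(α₂/α₁)` and `s` a covering integer for `lam`, there is a constant `C > 0`
(independent of `r`, `m`, `η`) such that for every sufficiently small `η > 0` there are
`m > 0` and `r > 0` with `0 < lam * r < r₁` — and `r` can be taken arbitrarily small and `m`
arbitrarily large — such that for all `2s` families of pairwise disjoint balls of radius
`lam * r` centered on `S` whose concentric `r`-balls cover `S`, and all coefficients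
`|β_{i,j}| ≤ 1`, for the functions `φ_{i,j}(z) = exp(-m⟨z_{i,j} - z, ν(z_{i,j})⟩)` and
`g_i = Σ_j β_{i,j} φ_{i,j}`, each index `i` satisfies (a)–(d). -/
theorem peak_function_estimates
    {n : ℕ} (D : Set (CSp n)) (hD : IsStrictlyConvexC2Domain D)
    (ν : CSp n → CSp n) (hν : IsOutwardUnitNormal D ν)
    (α₁ α₂ r₁ : ℝ) (hα₁pos : 0 < α₁) (hα₂pos : 0 < α₂) (hr₁pos : 0 < r₁)
    (hest₁ : ∀ w ∈ frontier D, ∀ z ∈ closure D, infDist z (frontier D) < r₁ →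
      α₁ * ‖z - w‖ ^ 2 ≤ (inner ℂ (ν w) (w - z) : ℂ).re)
    (hest₂ : ∀ w ∈ frontier D, ∀ z ∈ frontier D,
      (inner ℂ (ν w) (w - z) : ℂ).re ≤ α₂ * ‖z - w‖ ^ 2)
    (lam : ℝ) (hlam : lam = 4 * Real.sqrt (α₂ / α₁))
    (s : ℕ) (hs : IsCoveringInteger (frontier D) lam s) :
    ∃ C : ℝ, 0 < C ∧ ∃ η₀ : ℝ, 0 < η₀ ∧
      ∀ η : ℝ, 0 < η → η < η₀ →
        ∀ r' m₀ : ℝ, 0 < r' →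
          ∃ m r : ℝ, m₀ < m ∧ 0 < m ∧ 0 < r ∧ r < r' ∧ lam * r < r₁ ∧
            ∀ (N : Fin (2 * s) → ℕ) (c : (i : Fin (2 * s)) → Fin (N i) → CSp n)
              (β : (i : Fin (2 * s)) → Fin (N i) → ℂ),
              (∀ i j, c i j ∈ frontier D) →
              (∀ i j, norm (β i j) ≤ 1) →
              (∀ i, ∀ j k, j ≠ k →
                Disjoint (ball (c i j) (lam * r)) (ball (c i k) (lam * r))) →
              (frontier D ⊆ ⋃ i, ⋃ j, ball (c i j) r) →
              ∀ i : Fin (2 * s),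
                -- (a) if `z ∈ S` lies in no ball of `ℱ_i`, then `|g_i z| < η`;
                (∀ z ∈ frontier D, (∀ j, z ∉ ball (c i j) (lam * r)) →
                  norm (∑ j, β i j * peakFn ν m (c i j) z) < η) ∧
                -- (b) on `closure D ∩ 𝔹(z_{i,j}, lam r)`, `|g_i z − β_{i,j} φ_{i,j} z| < η`;
                (∀ j, ∀ z ∈ closure D ∩ ball (c i j) (lam * r),
                  norm ((∑ k, β i k * peakFn ν m (c i k) z)
                    - β i j * peakFn ν m (c i j) z) < η) ∧
                -- (c) on `S ∩ 𝔹(z_{i,j}, r)`, `|φ_{i,j} z| ≥ C η^(1/16)`;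
                (∀ j, ∀ z ∈ frontier D ∩ ball (c i j) r,
                  C * η ^ ((1:ℝ)/16) ≤ norm (peakFn ν m (c i j) z)) ∧
                -- (d) on `closure D ∩ b𝔹(z_{i,j}, lam r)`, `|φ_{i,j} z| < η^(2/3)`.
                (∀ j, ∀ z ∈ closure D ∩ sphere (c i j) (lam * r),
                  norm (peakFn ν m (c i j) z) < η ^ ((2:ℝ)/3)) := by
  classical
  set d := Module.finrank ℝ (CSp n) with hd
  set K : ℝ := (d : ℝ) + 1 with hK
  have hK1 : (1:ℝ) ≤ K := by
    rw [hK]; have : (0:ℝ) ≤ (d:ℝ) := Nat.cast_nonneg d; linarith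
  refine ⟨Real.exp (-K), Real.exp_pos _, 1, one_pos, ?_⟩
  intro η hη hη1 r' m₀ hr'
  have hlog : Real.log η < 0 := Real.log_neg hη hη1
  set T : ℝ := K - Real.log η / 16 with hT
  have hKT : K ≤ T := by rw [hT]; linarith
  have hT0 : 0 < T := by linarith
  have hlam0 : 0 < lam := by
    rw [hlam]
    have : 0 < Real.sqrt (α₂ / α₁) := Real.sqrt_pos.mpr (div_pos hα₂pos hα₁pos)
    linarith
  set mm : ℝ := max m₀ 0 + 1 with hmm
  have hmm0 : 0 < mm := by
    rw [hmm]; have := le_max_right m₀ (0:ℝ); linarith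
  set X : ℝ := Real.sqrt (T / (α₂ * mm)) with hX
  have hX0 : 0 < X := Real.sqrt_pos.mpr (by positivity)
  set r : ℝ := min r' (min (r₁ / lam) X) / 2 with hr
  have hr0 : 0 < r := by
    rw [hr]
    apply div_pos _ two_pos
    exact lt_min hr' (lt_min (div_pos hr₁pos hlam0) hX0)
  set m : ℝ := T / (α₂ * r ^ 2) with hm
  have hm0 : 0 < m := by
    rw [hm]; exact div_pos hT0 (by positivity)
  have hE1 : m * (α₂ * r ^ 2) = T := by
    rw [hm]; exact div_mul_cancel₀ _ (by positivity)
  have hrX : r ≤ X / 2 := by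
    rw [hr]
    apply div_le_div_of_nonneg_right ?_ (by norm_num : (0:ℝ) ≤ 2)
    · exact le_trans (min_le_right _ _) (min_le_right _ _)
  have hm₀ : m₀ < m := by
    have h1 : r ^ 2 ≤ X ^ 2 / 4 := by nlinarith
    have hX2 : X ^ 2 = T / (α₂ * mm) := Real.sq_sqrt (by positivity)
    have h2 : α₂ * r ^ 2 ≤ T / (4 * mm) := by
      rw [hX2] at h1
      have h2a := mul_le_mul_of_nonneg_left h1 hα₂pos.le
      have heq : α₂ * (T / (α₂ * mm) / 4) = T / (4 * mm) := by
        field_simp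
      linarith [heq ▸ h2a]
    have h3 : 4 * mm ≤ m := by
      rw [hm, le_div_iff₀ (by positivity)]
      calc 4 * mm * (α₂ * r ^ 2) ≤ 4 * mm * (T / (4 * mm)) := by
            apply mul_le_mul_of_nonneg_left h2 (by positivity)
        _ = T := by field_simp
    have h4 : m₀ < 4 * mm := by
      rw [hmm]; have := le_max_left m₀ (0:ℝ); linarith
    linarith
  have hrr' : r < r' := by
    have : r ≤ r' / 2 := by
      rw [hr]
      exact div_le_div_of_nonneg_right (min_le_left _ _) (by norm_num : (0:ℝ) ≤ 2)
    linarith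
  have hlr₁ : lam * r < r₁ := by
    have h1 : r ≤ (r₁ / lam) / 2 := by
      rw [hr]
      exact div_le_div_of_nonneg_right (le_trans (min_le_right _ _) (min_le_left _ _)) (by norm_num : (0:ℝ) ≤ 2)
    have h2 : lam * r ≤ lam * ((r₁ / lam) / 2) := mul_le_mul_of_nonneg_left h1 hlam0.le
    have h3 : lam * ((r₁ / lam) / 2) = r₁ / 2 := by field_simp
    linarith
  have hlam2 : lam ^ 2 = 16 * (α₂ / α₁) := by
    rw [hlam, mul_pow, Real.sq_sqrt (by positivity)]
    norm_num
  have hE2 : m * α₁ * (lam * r) ^ 2 = 16 * T := by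
    have h1 : (lam * r) ^ 2 = lam ^ 2 * r ^ 2 := by ring
    rw [h1, hlam2]
    have hαα : α₁ * (α₂ / α₁) = α₂ := by rw [mul_div_assoc']; exact mul_div_cancel_left₀ α₂ hα₁pos.ne'
    linear_combination 16 * hE1 + (16 * m * r ^ 2) * hαα
  have ha : 0 < lam * r := by positivity
  refine ⟨m, r, hm₀, hm0, hr0, hrr', hlr₁, ?_⟩
  intro N c β hcS hβ hdisj _hcover i
  have hTcore : T = ((Module.finrank ℝ (CSp n) : ℝ) + 1) - Real.log η / 16 := by
    rw [hT, hK]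
  -- key per-term estimate
  have key : ∀ (j : Fin (N i)) (z : CSp n), z ∈ closure D → infDist z (frontier D) < r₁ →
      norm (β i j * peakFn ν m (c i j) z)
        ≤ Real.exp (-(16 * T) * (dist z (c i j) / (lam * r)) ^ 2) := by
    intro j z hzD hinf
    rw [norm_mul]
    have hre : α₁ * ‖z - c i j‖ ^ 2 ≤ (inner ℂ (ν (c i j)) (c i j - z) : ℂ).re :=
      hest₁ (c i j) (hcS i j) z hzD hinf
    have hA : Real.exp (-(m * (inner ℂ (ν (c i j)) (c i j - z) : ℂ).re))
        ≤ Real.exp (-(16 * T) * (dist z (c i j) / (lam * r)) ^ 2) := by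
      apply Real.exp_le_exp.mpr
      rw [dist_eq_norm]
      have hiden : 16 * T * (‖z - c i j‖ / (lam * r)) ^ 2 = m * α₁ * ‖z - c i j‖ ^ 2 := by
        rw [← hE2]
        field_simp
      have h2 : m * (α₁ * ‖z - c i j‖ ^ 2) ≤ m * (inner ℂ (ν (c i j)) (c i j - z) : ℂ).re :=
        mul_le_mul_of_nonneg_left hre hm0.le
      nlinarith [h2, hiden]
    calc norm (β i j) * norm (peakFn ν m (c i j) z)
        ≤ 1 * norm (peakFn ν m (c i j) z) :=
          mul_le_mul_of_nonneg_right (hβ i j) (norm_nonneg _)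
      _ = norm (peakFn ν m (c i j) z) := one_mul _
      _ ≤ _ := by rw [abs_peakFn]; exact hA
  refine ⟨?_, ?_, ?_, ?_⟩
  -- (a)
  · intro z hz hnot
    have h1 : norm (∑ j, β i j * peakFn ν m (c i j) z)
        ≤ ∑ j, norm (β i j * peakFn ν m (c i j) z) := by
      exact
        norm_sum_le Finset.univ (fun j => β i j * peakFn ν m (c i j) z)
    refine lt_of_le_of_lt h1 ?_
    apply core (c i) (lam * r) ha (hdisj i) z Finset.univ
      (fun j _ => le_of_not_gt (fun h => hnot j (mem_ball.mpr h))) η T hη hη1 hTcore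
    intro j _
    exact key j z (frontier_subset_closure hz)
      (by rw [infDist_zero_of_mem hz]; exact hr₁pos)
  -- (b)
  · rintro j z ⟨hzD, hzb⟩
    rw [← Finset.sum_erase_eq_sub (Finset.mem_univ j)]
    have h1 : norm (∑ k ∈ Finset.univ.erase j, β i k * peakFn ν m (c i k) z)
        ≤ ∑ k ∈ Finset.univ.erase j, norm (β i k * peakFn ν m (c i k) z) := by
      exact
        norm_sum_le (Finset.univ.erase j) (fun k => β i k * peakFn ν m (c i k) z)
    refine lt_of_le_of_lt h1 ?_
    apply core (c i) (lam * r) ha (hdisj i) z (Finset.univ.erase j) ?_ η T hη hη1 hTcore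
    · intro k _
      refine key k z hzD ?_
      calc infDist z (frontier D) ≤ dist z (c i j) := infDist_le_dist_of_mem (hcS i j)
        _ < lam * r := mem_ball.mp hzb
        _ < r₁ := hlr₁
    · intro k hk
      have hkj : k ≠ j := (Finset.mem_erase.mp hk).1
      have hdisj' := hdisj i j k (Ne.symm hkj)
      have hznot : z ∉ ball (c i k) (lam * r) := fun hzk =>
        (Set.disjoint_left.mp hdisj') hzb hzk
      exact le_of_not_gt (fun h => hznot (mem_ball.mpr h))
  -- (c)
  · rintro j z ⟨hzS, hzb⟩
    rw [abs_peakFn]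
    have hre : (inner ℂ (ν (c i j)) (c i j - z) : ℂ).re ≤ α₂ * ‖z - c i j‖ ^ 2 :=
      hest₂ (c i j) (hcS i j) z hzS
    have hd2 : ‖z - c i j‖ < r := by rw [← dist_eq_norm]; exact mem_ball.mp hzb
    have hre2 : m * (inner ℂ (ν (c i j)) (c i j - z) : ℂ).re ≤ T := by
      have hsq : ‖z - c i j‖ ^ 2 ≤ r ^ 2 := by
        nlinarith [norm_nonneg (z - c i j), hd2]
      have h1 : (inner ℂ (ν (c i j)) (c i j - z) : ℂ).re ≤ α₂ * r ^ 2 :=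
        le_trans hre (mul_le_mul_of_nonneg_left hsq hα₂pos.le)
      calc m * (inner ℂ (ν (c i j)) (c i j - z) : ℂ).re ≤ m * (α₂ * r ^ 2) :=
            mul_le_mul_of_nonneg_left h1 hm0.le
        _ = T := hE1
    have heq : Real.exp (-K) * η ^ ((1:ℝ)/16) = Real.exp (-T) := by
      rw [Real.rpow_def_of_pos hη, ← Real.exp_add, hT]
      ring_nf
    rw [heq]
    exact Real.exp_le_exp.mpr (by linarith)
  -- (d)
  · rintro j z ⟨hzD, hzs⟩
    have hdist : dist z (c i j) = lam * r := mem_sphere.mp hzs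
    rw [abs_peakFn]
    have hinf : infDist z (frontier D) < r₁ := by
      calc infDist z (frontier D) ≤ dist z (c i j) := infDist_le_dist_of_mem (hcS i j)
        _ = lam * r := hdist
        _ < r₁ := hlr₁
    have hre := hest₁ (c i j) (hcS i j) z hzD hinf
    have hnorm : ‖z - c i j‖ = lam * r := by rw [← dist_eq_norm, hdist]
    have h1 : 16 * T ≤ m * (inner ℂ (ν (c i j)) (c i j - z) : ℂ).re := by
      have h2 : m * (α₁ * ‖z - c i j‖ ^ 2) ≤ m * (inner ℂ (ν (c i j)) (c i j - z) : ℂ).re :=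
        mul_le_mul_of_nonneg_left hre hm0.le
      rw [hnorm] at h2
      nlinarith [h2, hE2]
    have h2 : Real.exp (-(m * (inner ℂ (ν (c i j)) (c i j - z) : ℂ).re))
        ≤ Real.exp (-(16 * T)) := Real.exp_le_exp.mpr (by linarith)
    refine lt_of_le_of_lt h2 ?_
    rw [Real.rpow_def_of_pos hη]
    apply Real.exp_lt_exp.mpr
    rw [hT]
    nlinarith [hK1, hlog]
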